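/- arXiv:2306.13064 — 2 statements merged into one kernel-verified Lean document; each statement's English description precedes it below -/
import Mathlib

section
/- Sufficiency lemma (the paper's sufficiency-violation result, stated in its valid direction): Let (Ω, 𝓕, μ) be a probability space with Ω a standard Borel space, and let Y (outcomes), P (predictions), A (protected-class membership), and X (covariates) be measurable random variables on Ω taking values in standard Borel spaces. If the sufficiency fairness definition holds, i.e., Y is conditionally independent of A given the σ-algebra generated by the pair (P, X), and moreover the predictions are conditionally independent of the outcomes given the covariates, i.e., Y is conditionally independent of P given the σ-algebra generated by X, then there is no base-rate difference between protected and non-protected class conditional on the covariates, i.e., Y is conditionally independent of A given the σ-algebra generated by X. Equivalently, if Y is not conditionally independent of A given X, then sufficiency (Y conditionally independent of A given (P, X)) can hold only if Y is not conditionally independent of P given X. -/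
open MeasureTheory ProbabilityTheory

private def xAlg {Ω EX : Type*} [MeasurableSpace EX] (X : Ω → EX) : MeasurableSpace Ω :=
  MeasurableSpace.comap X inferInstance

private def pxAlg {Ω EP EX : Type*} [MeasurableSpace EP] [MeasurableSpace EX]
    (P : Ω → EP) (X : Ω → EX) : MeasurableSpace Ω :=
  MeasurableSpace.comap (fun ω => (P ω, X ω)) inferInstance

private lemma norm_condexp_indicator_le
    {Ω : Type*} {m m0 : MeasurableSpace Ω} {μ : Measure Ω} [IsProbabilityMeasure μ]
    (hm : m ≤ m0) (s : Set Ω) (hs : MeasurableSet s) :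
    ∀ᵐ x ∂μ, ‖(μ⟦s|m⟧) x‖ ≤ 1 := by
  have hf_int : Integrable (s.indicator fun _ => (1:ℝ)) μ :=
    (integrable_const 1).indicator hs
  have h0 : 0 ≤ᵐ[μ] μ⟦s|m⟧ :=
    condExp_nonneg (Filter.Eventually.of_forall fun x =>
      Set.indicator_nonneg (fun _ _ => zero_le_one) x)
  have h1 : μ⟦s|m⟧ ≤ᵐ[μ] μ[(fun _ => (1:ℝ))|m] :=
    condExp_mono hf_int (integrable_const 1)
      (Filter.Eventually.of_forall fun x => Set.indicator_le_self' (fun _ _ => zero_le_one) x)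
  rw [condExp_const hm] at h1
  filter_upwards [h0, h1] with x hx0 hx1
  have hx0' : (0:ℝ) ≤ (μ⟦s|m⟧) x := hx0
  rw [Real.norm_eq_abs, abs_le]
  exact ⟨by linarith, hx1⟩

/-- If `Y ⟂ P | σ(X)`, then conditioning `1_{Y ∈ s}` on `σ(P, X)` is the same as
conditioning on `σ(X)` alone. -/
private lemma condexp_pxAlg_eq
    {Ω : Type*} [mΩ : MeasurableSpace Ω] [StandardBorelSpace Ω]
    {μ : Measure Ω} [IsProbabilityMeasure μ]
    {EY EP EX : Type*}
    [MeasurableSpace EY] [StandardBorelSpace EY]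
    [MeasurableSpace EP] [StandardBorelSpace EP]
    [MeasurableSpace EX] [StandardBorelSpace EX]
    {Y : Ω → EY} {P : Ω → EP} {X : Ω → EX}
    (hY : Measurable Y) (hP : Measurable P) (hX : Measurable X)
    (hYP : CondIndepFun (xAlg X) hX.comap_le Y P μ)
    {s : Set EY} (hs : MeasurableSet s) :
    (μ⟦Y ⁻¹' s | pxAlg P X⟧) =ᵐ[μ] (μ⟦Y ⁻¹' s | xAlg X⟧) := by
  have hmX : xAlg X ≤ mΩ := hX.comap_le
  have hmPX : pxAlg P X ≤ mΩ := (hP.prodMk hX).comap_le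
  have hmX_le : xAlg X ≤ pxAlg P X := by
    have h1 : xAlg X = MeasurableSpace.comap (fun ω => (P ω, X ω))
        (MeasurableSpace.comap Prod.snd inferInstance) := by
      rw [xAlg, MeasurableSpace.comap_comp]; rfl
    rw [h1, pxAlg]
    exact MeasurableSpace.comap_mono measurable_snd.comap_le
  replace hYP := (condIndepFun_iff_condExp_inter_preimage_eq_mul hY hP).1 hYP
  have hf_int : Integrable ((Y ⁻¹' s).indicator fun _ => (1:ℝ)) μ :=
    (integrable_const 1).indicator (hY hs)
  have hg_int : Integrable (μ⟦Y ⁻¹' s | xAlg X⟧) μ := integrable_condExp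
  have hg_bdd : ∀ᵐ x ∂μ, ‖(μ⟦Y ⁻¹' s | xAlg X⟧) x‖ ≤ 1 :=
    norm_condexp_indicator_le hmX _ (hY hs)
  symm
  refine ae_eq_condExp_of_forall_setIntegral_eq hmPX hf_int
    (fun t _ _ => hg_int.integrableOn) (fun t ht _ => ?_)
    ((stronglyMeasurable_condExp.mono hmX_le).aestronglyMeasurable)
  -- reduce to the π-system of rectangles
  have h_eq : pxAlg P X = MeasurableSpace.generateFrom
      ((Set.preimage fun ω => (P ω, X ω)) ''
        (Set.image2 (· ×ˢ ·) { u : Set EP | MeasurableSet u } { v : Set EX | MeasurableSet v })) := by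
    rw [pxAlg, ← generateFrom_prod, MeasurableSpace.comap_generateFrom]
  have h_pi : IsPiSystem
      ((Set.preimage fun ω => (P ω, X ω)) ''
        (Set.image2 (· ×ˢ ·) { u : Set EP | MeasurableSet u } { v : Set EX | MeasurableSet v })) := by
    rintro _ ⟨r₁, hr₁, rfl⟩ _ ⟨r₂, hr₂, rfl⟩ hne
    rw [← Set.preimage_inter] at hne ⊢
    obtain ⟨x, hx⟩ := hne
    exact ⟨r₁ ∩ r₂, isPiSystem_prod r₁ hr₁ r₂ hr₂ ⟨_, hx⟩, rfl⟩
  refine @MeasurableSpace.induction_on_inter Ω (pxAlg P X)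
    (fun t _ => ∫ x in t, (μ⟦Y ⁻¹' s | xAlg X⟧) x ∂μ
      = ∫ x in t, (Y ⁻¹' s).indicator (fun _ => (1:ℝ)) x ∂μ) _
    h_eq h_pi ?_ ?_ ?_ ?_ t ht
  · simp
  · -- rectangles
    rintro _ ⟨_, ⟨u, hu, v, hv, rfl⟩, rfl⟩
    rw [Set.mk_preimage_prod]
    have h1P_int : Integrable ((P ⁻¹' u).indicator fun _ => (1:ℝ)) μ :=
      (integrable_const 1).indicator (hP hu)
    have hXv : MeasurableSet[xAlg X] (X ⁻¹' v) := ⟨v, hv, rfl⟩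
    have hind : ∀ h : Ω → ℝ, (P ⁻¹' u).indicator h
        = fun x => h x * (P ⁻¹' u).indicator (fun _ => (1:ℝ)) x := by
      intro h; funext x
      by_cases hx : x ∈ P ⁻¹' u <;>
        simp [Set.indicator_of_mem, Set.indicator_of_notMem, hx]
    have key : ∀ h : Ω → ℝ, ∫ x in P ⁻¹' u ∩ X ⁻¹' v, h x ∂μ
        = ∫ x in X ⁻¹' v, h x * (P ⁻¹' u).indicator (fun _ => (1:ℝ)) x ∂μ := by
      intro h
      rw [Set.inter_comm, ← setIntegral_indicator (hP hu), hind]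
    rw [key, key]
    have hgP_int : Integrable
        (fun x => (μ⟦Y ⁻¹' s | xAlg X⟧) x * (P ⁻¹' u).indicator (fun _ => (1:ℝ)) x) μ :=
      h1P_int.bdd_mul hg_int.aestronglyMeasurable hg_bdd
    -- left side
    have hL : ∫ x in X ⁻¹' v,
          (μ⟦Y ⁻¹' s | xAlg X⟧) x * (P ⁻¹' u).indicator (fun _ => (1:ℝ)) x ∂μ
        = ∫ x in X ⁻¹' v, (μ⟦Y ⁻¹' s | xAlg X⟧) x * (μ⟦P ⁻¹' u | xAlg X⟧) x ∂μ := by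
      rw [← setIntegral_condExp hmX hgP_int hXv]
      refine setIntegral_congr_ae (hmX _ hXv) ?_
      filter_upwards [condExp_stronglyMeasurable_mul_of_bound hmX
        stronglyMeasurable_condExp h1P_int 1 hg_bdd] with x hx _
      exact hx
    -- right side
    have hfP : (fun x => (Y ⁻¹' s).indicator (fun _ => (1:ℝ)) x
          * (P ⁻¹' u).indicator (fun _ => (1:ℝ)) x)
        = (Y ⁻¹' s ∩ P ⁻¹' u).indicator fun _ => (1:ℝ) := by
      funext x
      by_cases hx1 : x ∈ Y ⁻¹' s <;> by_cases hx2 : x ∈ P ⁻¹' u <;>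
        simp [Set.indicator_of_mem, Set.indicator_of_notMem, hx1, hx2, Set.mem_inter_iff]
    have hR : ∫ x in X ⁻¹' v,
          (Y ⁻¹' s).indicator (fun _ => (1:ℝ)) x * (P ⁻¹' u).indicator (fun _ => (1:ℝ)) x ∂μ
        = ∫ x in X ⁻¹' v, (μ⟦Y ⁻¹' s | xAlg X⟧) x * (μ⟦P ⁻¹' u | xAlg X⟧) x ∂μ := by
      rw [show (fun x => (Y ⁻¹' s).indicator (fun _ => (1:ℝ)) x
          * (P ⁻¹' u).indicator (fun _ => (1:ℝ)) x)
        = (Y ⁻¹' s ∩ P ⁻¹' u).indicator (fun _ => (1:ℝ)) from hfP]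
      rw [← setIntegral_condExp hmX
        ((integrable_const (1:ℝ)).indicator ((hY hs).inter (hP hu))) hXv]
      refine setIntegral_congr_ae (hmX _ hXv) ?_
      filter_upwards [hYP s u hs hu] with x hx _
      exact hx
    rw [hL, hR]
  · -- complements
    intro t ht' hCt
    have htm : MeasurableSet t := hmPX _ ht'
    have hg_tot := integral_add_compl htm hg_int
    have hf_tot := integral_add_compl htm hf_int
    have h_tot : ∫ x, (μ⟦Y ⁻¹' s | xAlg X⟧) x ∂μ
        = ∫ x, (Y ⁻¹' s).indicator (fun _ => (1:ℝ)) x ∂μ := integral_condExp hmX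
    linarith
  · -- disjoint unions
    intro t hdisj htm hCt
    rw [integral_iUnion (fun i => hmPX _ (htm i)) hdisj hg_int.integrableOn,
      integral_iUnion (fun i => hmPX _ (htm i)) hdisj hf_int.integrableOn]
    exact tsum_congr hCt

/-- Sufficiency lemma: if sufficiency holds (`Y ⟂ A | σ(P, X)`) and the predictions
carry no information about the outcomes beyond the covariates (`Y ⟂ P | σ(X)`),
then there is no base-rate difference conditional on the covariates (`Y ⟂ A | σ(X)`). -/
theorem sufficiency_lemma
    {Ω : Type*} [MeasurableSpace Ω] [StandardBorelSpace Ω]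
    {μ : Measure Ω} [IsProbabilityMeasure μ]
    {EY EP EA EX : Type*}
    [MeasurableSpace EY] [StandardBorelSpace EY]
    [MeasurableSpace EP] [StandardBorelSpace EP]
    [MeasurableSpace EA] [StandardBorelSpace EA]
    [MeasurableSpace EX] [StandardBorelSpace EX]
    {Y : Ω → EY} {P : Ω → EP} {A : Ω → EA} {X : Ω → EX}
    (hY : Measurable Y) (hP : Measurable P) (hA : Measurable A) (hX : Measurable X)
    (hsuff : CondIndepFun (MeasurableSpace.comap (fun ω => (P ω, X ω)) inferInstance)
      (Measurable.comap_le (hP.prodMk hX)) Y A μ)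
    (hYP : CondIndepFun (MeasurableSpace.comap X inferInstance) hX.comap_le Y P μ) :
    CondIndepFun (MeasurableSpace.comap X inferInstance) hX.comap_le Y A μ := by
  have hmX : xAlg X ≤ ‹MeasurableSpace Ω› := hX.comap_le
  have hmPX : pxAlg P X ≤ ‹MeasurableSpace Ω› := (hP.prodMk hX).comap_le
  have hmX_le : xAlg X ≤ pxAlg P X := by
    have h1 : xAlg X = MeasurableSpace.comap (fun ω => (P ω, X ω))
        (MeasurableSpace.comap Prod.snd inferInstance) := by
      rw [xAlg, MeasurableSpace.comap_comp]; rfl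
    rw [h1, pxAlg]
    exact MeasurableSpace.comap_mono measurable_snd.comap_le
  have hsuff' : CondIndepFun (pxAlg P X) hmPX Y A μ := hsuff
  have hYP' : CondIndepFun (xAlg X) hmX Y P μ := hYP
  rw [condIndepFun_iff_condExp_inter_preimage_eq_mul hY hA] at hsuff'
  show CondIndepFun (xAlg X) hmX Y A μ
  rw [condIndepFun_iff_condExp_inter_preimage_eq_mul hY hA]
  intro s t hs ht
  have hK := condexp_pxAlg_eq hY hP hX hYP' hs
  have hb : ∀ᵐ x ∂μ, ‖(μ⟦Y ⁻¹' s | xAlg X⟧) x‖ ≤ 1 :=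
    norm_condexp_indicator_le hmX _ (hY hs)
  calc (μ⟦Y ⁻¹' s ∩ A ⁻¹' t | xAlg X⟧)
      =ᵐ[μ] μ[μ⟦Y ⁻¹' s ∩ A ⁻¹' t | pxAlg P X⟧ | xAlg X] :=
        (condExp_condExp_of_le hmX_le hmPX).symm
    _ =ᵐ[μ] μ[(fun ω => (μ⟦Y ⁻¹' s | pxAlg P X⟧) ω * (μ⟦A ⁻¹' t | pxAlg P X⟧) ω) | xAlg X] :=
        condExp_congr_ae (hsuff' s t hs ht)
    _ =ᵐ[μ] μ[(fun ω => (μ⟦Y ⁻¹' s | xAlg X⟧) ω * (μ⟦A ⁻¹' t | pxAlg P X⟧) ω) | xAlg X] :=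
        condExp_congr_ae (hK.mul Filter.EventuallyEq.rfl)
    _ =ᵐ[μ] fun ω => (μ⟦Y ⁻¹' s | xAlg X⟧) ω * (μ[μ⟦A ⁻¹' t | pxAlg P X⟧ | xAlg X]) ω :=
        condExp_stronglyMeasurable_mul_of_bound hmX stronglyMeasurable_condExp
          integrable_condExp 1 hb
    _ =ᵐ[μ] fun ω => (μ⟦Y ⁻¹' s | xAlg X⟧) ω * (μ⟦A ⁻¹' t | xAlg X⟧) ω :=
        Filter.EventuallyEq.mul Filter.EventuallyEq.rfl
          (condExp_condExp_of_le hmX_le hmPX)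
end

section
/- Bound on the number of candidate subsets in the interval scan: Let n ≥ 1 and let a, b : Fin n → ℝ with a i < b i for every i. For θ ∈ ℝ define S(θ) = {i : a i < θ and θ < b i}. Then the number of distinct nonempty sets in the image {S(θ) : θ ∈ ℝ} is at most 2n − 1. -/
open Finset

section Aux

variable {n : ℕ} (a b : Fin n → ℝ)

/-- Count of lower endpoints strictly below `θ` plus upper endpoints at most `θ`. -/
private noncomputable def gcount (θ : ℝ) : ℕ :=
  (Finset.univ.filter (fun i => a i < θ)).card +
  (Finset.univ.filter (fun i => b i ≤ θ)).card

private lemma gcount_key_mono {θ θ' : ℝ} (hle : θ ≤ θ')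
    (hgeq : gcount a b θ = gcount a b θ') :
    {i : Fin n | a i < θ ∧ θ < b i} = {i | a i < θ' ∧ θ' < b i} := by
  classical
  have hA : univ.filter (fun i => a i < θ) ⊆ univ.filter (fun i => a i < θ') := by
    intro i hi; simp only [mem_filter, mem_univ, true_and] at hi ⊢; linarith
  have hB : univ.filter (fun i => b i ≤ θ) ⊆ univ.filter (fun i => b i ≤ θ') := by
    intro i hi; simp only [mem_filter, mem_univ, true_and] at hi ⊢; linarith
  have hAc := Finset.card_le_card hA
  have hBc := Finset.card_le_card hB
  unfold gcount at hgeq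
  have hAeq := Finset.eq_of_subset_of_card_le hA (by omega)
  have hBeq := Finset.eq_of_subset_of_card_le hB (by omega)
  ext i
  have hAi : a i < θ ↔ a i < θ' := by
    constructor <;> intro h
    · have : i ∈ univ.filter (fun i => a i < θ) := by simp [h]
      rw [hAeq] at this; simpa using this
    · have : i ∈ univ.filter (fun i => a i < θ') := by simp [h]
      rw [← hAeq] at this; simpa using this
  have hBi : b i ≤ θ ↔ b i ≤ θ' := by
    constructor <;> intro h
    · have : i ∈ univ.filter (fun i => b i ≤ θ) := by simp [h]
      rw [hBeq] at this; simpa using this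
    · have : i ∈ univ.filter (fun i => b i ≤ θ') := by simp [h]
      rw [← hBeq] at this; simpa using this
  simp only [Set.mem_setOf_eq]
  constructor
  · rintro ⟨h1, h2⟩
    exact ⟨hAi.mp h1, lt_of_not_ge (fun h => h2.not_ge (hBi.mpr h))⟩
  · rintro ⟨h1, h2⟩
    exact ⟨hAi.mpr h1, lt_of_not_ge (fun h => h2.not_ge (hBi.mp h))⟩

private lemma gcount_key {θ θ' : ℝ} (hgeq : gcount a b θ = gcount a b θ') :
    {i : Fin n | a i < θ ∧ θ < b i} = {i | a i < θ' ∧ θ' < b i} := by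
  rcases le_total θ θ' with h | h
  · exact gcount_key_mono a b h hgeq
  · exact (gcount_key_mono a b h hgeq.symm).symm

end Aux

/-- Bound on the number of candidate subsets in the interval scan: for `n` intervals
`(a i, b i)`, the collection of distinct nonempty sets of the form
`S(θ) = {i : a i < θ ∧ θ < b i}` has at most `2n − 1` elements. -/
theorem interval_scan_candidate_bound (n : ℕ) (hn : 1 ≤ n) (a b : Fin n → ℝ)
    (hab : ∀ i, a i < b i) :
    Set.ncard {s : Set (Fin n) | s.Nonempty ∧
        ∃ θ : ℝ, s = {i | a i < θ ∧ θ < b i}} ≤ 2 * n - 1 := by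
  classical
  set C := {s : Set (Fin n) | s.Nonempty ∧
      ∃ θ : ℝ, s = {i | a i < θ ∧ θ < b i}} with hC
  set f : Set (Fin n) → ℕ := fun s =>
    if h : ∃ θ : ℝ, s = {i | a i < θ ∧ θ < b i} then gcount a b h.choose else 0
    with hf
  -- On C, `f s = gcount a b θ_s` where `s = S(θ_s)`.
  have hfs : ∀ s ∈ C, ∃ θ : ℝ, s = {i | a i < θ ∧ θ < b i} ∧ f s = gcount a b θ := by
    intro s hs
    obtain ⟨-, h⟩ := hs
    exact ⟨h.choose, h.choose_spec, by simp [hf, dif_pos h]⟩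
  -- injectivity on C
  have hinj : Set.InjOn f C := by
    intro s hs t ht hst
    obtain ⟨θs, hθs, hfseq⟩ := hfs s hs
    obtain ⟨θt, hθt, hfteq⟩ := hfs t ht
    rw [hθs, hθt]
    exact gcount_key a b (by rw [← hfseq, ← hfteq, hst])
  -- image bounds
  have himg : f '' C ⊆ Set.Icc 1 (2 * n - 1) := by
    rintro v ⟨s, hs, rfl⟩
    obtain ⟨θ, hθ, hfeq⟩ := hfs s hs
    obtain ⟨i, hi⟩ := hs.1
    rw [hθ] at hi
    obtain ⟨hia, hib⟩ := hi
    have h1 : 1 ≤ (Finset.univ.filter (fun j => a j < θ)).card := by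
      have : i ∈ Finset.univ.filter (fun j => a j < θ) := by simp [hia]
      exact Finset.card_pos.mpr ⟨i, this⟩
    have h2 : (Finset.univ.filter (fun j => b j ≤ θ)).card ≤ n - 1 := by
      have hss : Finset.univ.filter (fun j => b j ≤ θ) ⊂ Finset.univ := by
        refine Finset.ssubset_univ_iff.mpr ?_
        intro hcon
        have : i ∈ Finset.univ.filter (fun j => b j ≤ θ) := by rw [hcon]; exact Finset.mem_univ i
        simp only [Finset.mem_filter] at this
        exact absurd this.2 (not_le.mpr hib)
      have := Finset.card_lt_card hss
      simp only [Finset.card_univ, Fintype.card_fin] at this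
      omega
    have hcard : (Finset.univ.filter (fun j => a j < θ)).card ≤ n := by
      have := Finset.card_filter_le Finset.univ (fun j => a j < θ)
      simpa using this
    rw [hfeq]
    unfold gcount
    constructor <;> omega
  have hcardimg : (f '' C).ncard = C.ncard := Set.ncard_image_of_injOn hinj
  have hle : (f '' C).ncard ≤ (Set.Icc 1 (2 * n - 1)).ncard :=
    Set.ncard_le_ncard himg (Set.finite_Icc _ _)
  have hIcc : (Set.Icc 1 (2 * n - 1)).ncard = 2 * n - 1 := by
    rw [← Finset.coe_Icc, Set.ncard_coe_finset, Nat.card_Icc]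
    omega
  omega
end
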